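/- If G is a d-regular finite simple graph with d ≥ 9, then ch_σ^t(G) ≤ 2: for every linear order on the disjoint union V(G) ∪ E(G) and every assignment to each vertex and each edge of a set of two real numbers, there exists a total weighting taking each weight from its assigned set whose induced total sequence colouring of the vertices is proper. -/

import Mathlib

/-!
Common definitions: total sequence colourings induced by a total weighting and a linear
order on the disjoint union `V(G) ⊕ E(G)` of a finite simple graph.
-/

open Finset

variable {V : Type*}

/-- The elements of `V(G) ⊕ E(G)` relevant to the vertex `v` (namely `v` itself together
with the edges incident to `v`), sorted in increasing order with respect to the linear
order `σ` on `V(G) ⊕ E(G)`. -/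
noncomputable def incTotal [Fintype V] [DecidableEq V] (G : SimpleGraph V) [DecidableRel G.Adj]
    (σ : LinearOrder (V ⊕ G.edgeSet)) (v : V) : List (V ⊕ G.edgeSet) :=
  letI := σ
  letI : DecidablePred (fun x : V ⊕ G.edgeSet =>
      Sum.elim (fun u : V => u = v) (fun e : G.edgeSet => v ∈ (e : Sym2 V)) x) :=
    Classical.decPred _
  ((Finset.univ : Finset (V ⊕ G.edgeSet)).filter
    (fun x : V ⊕ G.edgeSet =>
      Sum.elim (fun u : V => u = v) (fun e : G.edgeSet => v ∈ (e : Sym2 V)) x)).sort σ.le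

/-- The induced total sequence colouring: `c(v)` consists of `w(v)` together with the
weights `w(e)` of the edges `e` incident to `v`, all written in increasing order with
respect to `σ`. -/
noncomputable def totalSeqColor [Fintype V] [DecidableEq V] (G : SimpleGraph V)
    [DecidableRel G.Adj] (σ : LinearOrder (V ⊕ G.edgeSet)) (w : V ⊕ G.edgeSet → ℝ) (v : V) :
    List ℝ :=
  (incTotal G σ v).map w

/-- The induced total sequence colouring is proper: adjacent vertices receive distinct
sequences. -/
def ProperTotalSeq [Fintype V] [DecidableEq V] (G : SimpleGraph V) [DecidableRel G.Adj]
    (σ : LinearOrder (V ⊕ G.edgeSet)) (w : V ⊕ G.edgeSet → ℝ) : Prop :=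
  ∀ u v : V, G.Adj u v → totalSeqColor G σ w u ≠ totalSeqColor G σ w v

section Core
variable {X : Type*} [Fintype X] [DecidableEq X]

/-- Events determined by complementary coordinate sets are independent (counting form). -/
lemma indep_card (s : Finset X) (B A : Finset (X → Bool))
    (hB : ∀ f g : X → Bool, (∀ x ∈ s, f x = g x) → (f ∈ B ↔ g ∈ B))
    (hA : ∀ f g : X → Bool, (∀ x ∉ s, f x = g x) → (f ∈ A ↔ g ∈ A)) :
    (B ∩ A).card * 2 ^ (Fintype.card X) = B.card * A.card := by
  classical
  have key : ((B ∩ A) ×ˢ (univ : Finset (X → Bool))).card = (B ×ˢ A).card := by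
    apply Finset.card_nbij'
      (i := fun p => (fun x => if x ∈ s then p.1 x else p.2 x,
                      fun x => if x ∈ s then p.2 x else p.1 x))
      (j := fun p => (fun x => if x ∈ s then p.1 x else p.2 x,
                      fun x => if x ∈ s then p.2 x else p.1 x))
    · rintro ⟨f, g⟩ hp
      simp only [Finset.mem_coe, Finset.mem_product, Finset.mem_inter] at hp ⊢
      refine ⟨(hB f _ ?_).mp hp.1.1, (hA f _ ?_).mp hp.1.2⟩
      · intro x hx; simp [hx]
      · intro x hx; simp [hx]
    · rintro ⟨f, g⟩ hp
      simp only [Finset.mem_coe, Finset.mem_product, Finset.mem_inter] at hp ⊢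
      refine ⟨⟨(hB f _ ?_).mp hp.1, (hA g _ ?_).mp hp.2⟩, Finset.mem_univ _⟩
      · intro x hx; simp [hx]
      · intro x hx; simp [hx]
    · rintro ⟨f, g⟩ _
      refine Prod.ext (funext fun x => ?_) (funext fun x => ?_) <;>
        by_cases hx : x ∈ s <;> simp [hx]
    · rintro ⟨f, g⟩ _
      refine Prod.ext (funext fun x => ?_) (funext fun x => ?_) <;>
        by_cases hx : x ∈ s <;> simp [hx]
  have h2 : (Finset.univ : Finset (X → Bool)).card = 2 ^ (Fintype.card X) := by
    simp [Finset.card_univ, Fintype.card_fun]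
  calc (B ∩ A).card * 2 ^ (Fintype.card X)
      = ((B ∩ A) ×ˢ (univ : Finset (X → Bool))).card := by rw [Finset.card_product, h2]
    _ = (B ×ˢ A).card := key
    _ = B.card * A.card := Finset.card_product _ _

variable (va vb : X → ℝ)

/-- The weighting induced by a boolean choice function. -/
def valf (f : X → Bool) (x : X) : ℝ := if f x then va x else vb x

lemma flip_card (hv : ∀ x, va x ≠ vb x) {x y : X} (hxy : x ≠ y) :
    (univ.filter (fun f : X → Bool => valf va vb f x = valf va vb f y)).card * 2
      ≤ 2 ^ (Fintype.card X) := by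
  classical
  set B := univ.filter (fun f : X → Bool => valf va vb f x = valf va vb f y) with hBdef
  have hinj : ∀ f ∈ B, Function.update f y (! f y) ∈ univ \ B := by
    intro f hf
    simp only [hBdef, Finset.mem_filter, Finset.mem_univ, true_and] at hf
    simp only [Finset.mem_sdiff, Finset.mem_univ, true_and, hBdef, Finset.mem_filter,
      not_and, true_implies]
    intro hcon
    have h1 : valf va vb (Function.update f y (! f y)) x = valf va vb f x := by
      simp [valf, Function.update_of_ne hxy]
    have h2 : valf va vb (Function.update f y (! f y)) y ≠ valf va vb f y := by
      simp only [valf, Function.update_self]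
      cases hfy : f y <;> simp [hfy]
      · exact hv y
      · exact fun h => hv y h.symm
    exact h2 (by rw [← hcon, h1, hf])
  have hinj2 : Set.InjOn (fun f : X → Bool => Function.update f y (! f y)) B := by
    intro f hf g hg hfg
    funext z
    by_cases hz : z = y
    · subst hz
      have := congrFun hfg z
      simp only [Function.update_self] at this
      exact Bool.not_inj this
    · have := congrFun hfg z
      simpa [Function.update_of_ne hz] using this
  have hle : B.card ≤ (univ \ B).card := Finset.card_le_card_of_injOn _ hinj hinj2
  have : B.card + (univ \ B).card = 2 ^ (Fintype.card X) := by
    rw [Finset.card_sdiff_of_subset (Finset.subset_univ _)]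
    have hB : B.card ≤ (univ : Finset (X → Bool)).card := Finset.card_le_univ _
    have h2 : (Finset.univ : Finset (X → Bool)).card = 2 ^ (Fintype.card X) := by
      simp [Finset.card_univ, Fintype.card_fun]
    omega
  omega
end Core

section Pairs
variable {X : Type*} [Fintype X] [DecidableEq X] (va vb : X → ℝ)

lemma count_pairs (hv : ∀ x, va x ≠ vb x) :
    ∀ (P : Finset ℕ) (pa pb : ℕ → X),
      (∀ i ∈ P, pa i ≠ pb i) →
      (∀ i ∈ P, ∀ j ∈ P, i ≠ j →
        pa i ≠ pa j ∧ pa i ≠ pb j ∧ pb i ≠ pa j ∧ pb i ≠ pb j) →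
      (univ.filter (fun f : X → Bool =>
        ∀ i ∈ P, valf va vb f (pa i) = valf va vb f (pb i))).card * 2 ^ P.card
        ≤ 2 ^ (Fintype.card X) := by
  classical
  intro P
  induction P using Finset.induction_on with
  | empty =>
    intro pa pb _ _
    simp only [Finset.notMem_empty, false_implies, implies_true, Finset.filter_true,
      Finset.card_empty, pow_zero, mul_one]
    calc (univ : Finset (X → Bool)).card = 2 ^ (Fintype.card X) := by
          simp [Finset.card_univ, Fintype.card_fun]
      _ ≤ 2 ^ (Fintype.card X) := le_refl _
  | @insert i P hiP ih =>
    intro pa pb hne hdisj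
    set s : Finset X := {pa i, pb i} with hs
    set B := univ.filter (fun f : X → Bool => valf va vb f (pa i) = valf va vb f (pb i))
      with hBdef
    set A := univ.filter (fun f : X → Bool =>
        ∀ j ∈ P, valf va vb f (pa j) = valf va vb f (pb j)) with hAdef
    have hsplit : univ.filter (fun f : X → Bool =>
        ∀ j ∈ insert i P, valf va vb f (pa j) = valf va vb f (pb j)) = B ∩ A := by
      ext f
      simp only [hBdef, hAdef, Finset.mem_inter, Finset.mem_filter, Finset.mem_univ,
        true_and, Finset.mem_insert]
      constructor
      · intro h
        exact ⟨h i (Or.inl rfl), fun j hj => h j (Or.inr hj)⟩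
      · rintro ⟨h1, h2⟩ j (rfl | hj)
        · exact h1
        · exact h2 j hj
    have hindep : (B ∩ A).card * 2 ^ (Fintype.card X) = B.card * A.card := by
      apply indep_card s
      · intro f g hfg
        simp only [hBdef, Finset.mem_filter, Finset.mem_univ, true_and]
        have h1 : f (pa i) = g (pa i) := hfg _ (by simp [hs])
        have h2 : f (pb i) = g (pb i) := hfg _ (by simp [hs])
        simp [valf, h1, h2]
      · intro f g hfg
        simp only [hAdef, Finset.mem_filter, Finset.mem_univ, true_and]
        have key : ∀ j ∈ P, f (pa j) = g (pa j) ∧ f (pb j) = g (pb j) := by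
          intro j hj
          have hd := hdisj j (Finset.mem_insert_of_mem hj) i (Finset.mem_insert_self _ _)
            (fun h => hiP (h ▸ hj))
          constructor
          · apply hfg; simp only [hs, Finset.mem_insert, Finset.mem_singleton]
            push_neg; exact ⟨hd.1, hd.2.1⟩
          · apply hfg; simp only [hs, Finset.mem_insert, Finset.mem_singleton]
            push_neg; exact ⟨hd.2.2.1, hd.2.2.2⟩
        constructor <;> intro h j hj <;>
          [skip; skip] <;> obtain ⟨e1, e2⟩ := key j hj
        · simp only [valf, ← e1, ← e2]; exact h j hj
        · simp only [valf, e1, e2]; exact h j hj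
    have hB2 : B.card * 2 ≤ 2 ^ (Fintype.card X) :=
      flip_card va vb hv (hne i (Finset.mem_insert_self _ _))
    have hA2 : A.card * 2 ^ P.card ≤ 2 ^ (Fintype.card X) := by
      apply ih
      · intro j hj; exact hne j (Finset.mem_insert_of_mem hj)
      · intro j hj k hk hjk
        exact hdisj j (Finset.mem_insert_of_mem hj) k (Finset.mem_insert_of_mem hk) hjk
    rw [hsplit, Finset.card_insert_of_notMem hiP]
    have step : (B ∩ A).card * 2 ^ (P.card + 1) * 2 ^ (Fintype.card X)
        ≤ 2 ^ (Fintype.card X) * 2 ^ (Fintype.card X) := by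
      calc (B ∩ A).card * 2 ^ (P.card + 1) * 2 ^ (Fintype.card X)
          = ((B ∩ A).card * 2 ^ (Fintype.card X)) * (2 * 2 ^ P.card) := by ring
        _ = (B.card * A.card) * (2 * 2 ^ P.card) := by rw [hindep]
        _ = (B.card * 2) * (A.card * 2 ^ P.card) := by ring
        _ ≤ 2 ^ (Fintype.card X) * 2 ^ (Fintype.card X) := Nat.mul_le_mul hB2 hA2
    have hpos : 0 < 2 ^ (Fintype.card X) := Nat.pow_pos (by norm_num)
    exact Nat.le_of_mul_le_mul_right step hpos
end Pairs

section LLL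
variable {X ι : Type*} [Fintype X] [DecidableEq X] [Fintype ι] [DecidableEq ι]

/-- Finite, counting version of the Lovász Local Lemma for boolean variable spaces. -/
lemma LLL (vars : ι → Finset X) (Bad : ι → Finset (X → Bool))
    (hcyl : ∀ i, ∀ f g : X → Bool, (∀ x ∈ vars i, f x = g x) → (f ∈ Bad i ↔ g ∈ Bad i))
    (D : ℕ) (hD : 1 ≤ D)
    (hΓ : ∀ i, (univ.filter (fun j => ¬ Disjoint (vars i) (vars j))).card ≤ D)
    (x : ℝ) (hx0 : 0 < x) (hx1 : x < 1)
    (hp : ∀ i, ((Bad i).card : ℝ) ≤ x * (1-x) ^ (D-1) * 2 ^ (Fintype.card X)) :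
    ∃ f : X → Bool, ∀ i, f ∉ Bad i := by
  classical
  set A : Finset ι → Finset (X → Bool) :=
    fun S => univ.filter (fun f => ∀ j ∈ S, f ∉ Bad j) with hAdef
  have hx1' : 0 < 1 - x := by linarith
  have hx1'' : 1 - x ≤ 1 := by linarith
  have h2X : (0:ℝ) < 2 ^ (Fintype.card X) := by positivity
  have hanti : ∀ S T : Finset ι, S ⊆ T → A T ⊆ A S := by
    intro S T hST f hf
    simp only [hAdef, Finset.mem_filter, Finset.mem_univ, true_and] at hf ⊢
    exact fun j hj => hf j (hST hj)
  have hAinsert : ∀ (j : ι) (W : Finset ι), A (insert j W) = A W \ Bad j := by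
    intro j W
    ext f
    simp only [hAdef, Finset.mem_filter, Finset.mem_univ, true_and, Finset.mem_sdiff,
      Finset.mem_insert]
    constructor
    · intro h; exact ⟨fun k hk => h k (Or.inr hk), h j (Or.inl rfl)⟩
    · rintro ⟨h1, h2⟩ k (rfl | hk)
      · exact h2
      · exact h1 k hk
  have hAcard : ∀ (j : ι) (W : Finset ι),
      ((A (insert j W)).card : ℝ) = (A W).card - ((Bad j ∩ A W).card : ℝ) := by
    intro j W
    rw [hAinsert j W]
    have h := Finset.card_inter_add_card_sdiff (A W) (Bad j)
    have h2 : A W ∩ Bad j = Bad j ∩ A W := Finset.inter_comm _ _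
    rw [h2] at h
    push_cast [← h]
    ring
  have claim : ∀ n : ℕ, ∀ S : Finset ι, S.card ≤ n →
      (0 < ((A S).card : ℝ)) ∧
      (∀ i, i ∉ S → ((Bad i ∩ A S).card : ℝ) ≤ x * (A S).card) := by
    intro n
    induction n with
    | zero =>
      intro S hS
      have hSempty : S = ∅ := Finset.card_eq_zero.mp (Nat.le_zero.mp hS)
      subst hSempty
      have hAuniv : A ∅ = univ := by ext f; simp [hAdef]
      have hcardu : ((univ : Finset (X → Bool)).card : ℝ) = 2 ^ (Fintype.card X) := by
        rw [Finset.card_univ, Fintype.card_fun]; push_cast; simp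
      constructor
      · rw [hAuniv, hcardu]; exact h2X
      · intro i _
        rw [hAuniv, Finset.inter_univ, hcardu]
        calc ((Bad i).card : ℝ) ≤ x * (1-x) ^ (D-1) * 2 ^ (Fintype.card X) := hp i
          _ ≤ x * 1 * 2 ^ (Fintype.card X) := by
              apply mul_le_mul_of_nonneg_right _ (by positivity)
              apply mul_le_mul_of_nonneg_left _ (le_of_lt hx0)
              exact pow_le_one₀ (le_of_lt hx1') hx1''
          _ = x * 2 ^ (Fintype.card X) := by ring
    | succ n ih =>
      intro S hS
      have bound : ∀ i, i ∉ S → ((Bad i ∩ A S).card : ℝ) ≤ x * (A S).card := by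
        intro i hiS
        set Γ : Finset ι := univ.filter (fun j => ¬ Disjoint (vars i) (vars j)) with hΓdef
        set S1 := S ∩ Γ with hS1
        set S2 := S \ Γ with hS2
        have hS1sub : S1 ⊆ S := Finset.inter_subset_left
        have hS2sub : S2 ⊆ S := Finset.sdiff_subset
        have hS12 : S2 ∪ S1 = S := Finset.sdiff_union_inter S Γ
        have peel : ∀ T : Finset ι, T ⊆ S1 →
            (1-x) ^ T.card * ((A S2).card : ℝ) ≤ (A (S2 ∪ T)).card := by
          intro T
          induction T using Finset.induction_on with
          | empty => intro _; simp
          | @insert j T' hjT' ihT =>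
            intro hsub
            have hjS1 : j ∈ S1 := hsub (Finset.mem_insert_self _ _)
            have hT'sub : T' ⊆ S1 := fun k hk => hsub (Finset.mem_insert_of_mem hk)
            have hUnion : S2 ∪ insert j T' = insert j (S2 ∪ T') := by
              ext k; simp only [Finset.mem_union, Finset.mem_insert]; tauto
            have hjW : j ∉ S2 ∪ T' := by
              simp only [Finset.mem_union]
              rintro (h | h)
              · exact (Finset.mem_sdiff.mp h).2 (Finset.mem_of_mem_inter_right hjS1)
              · exact hjT' h
            have hWcard : (S2 ∪ T').card ≤ n := by
              have hsubS : S2 ∪ T' ⊆ S.erase j := by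
                intro k hk
                rw [Finset.mem_erase]
                constructor
                · rintro rfl; exact hjW hk
                · rcases Finset.mem_union.mp hk with h | h
                  · exact hS2sub h
                  · exact hS1sub (hT'sub h)
              calc (S2 ∪ T').card ≤ (S.erase j).card := Finset.card_le_card hsubS
                _ = S.card - 1 := Finset.card_erase_of_mem (hS1sub hjS1)
                _ ≤ n := by omega
            obtain ⟨hpos', hbound'⟩ := ih (S2 ∪ T') hWcard
            have hb := hbound' j hjW
            have hstep : ((A (insert j (S2 ∪ T'))).card : ℝ)
                ≥ (1 - x) * (A (S2 ∪ T')).card := by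
              rw [hAcard j (S2 ∪ T')]
              nlinarith [hb]
            calc (1-x) ^ (insert j T').card * ((A S2).card : ℝ)
                = (1-x) * ((1-x) ^ T'.card * (A S2).card) := by
                  rw [Finset.card_insert_of_notMem hjT']; ring
              _ ≤ (1-x) * (A (S2 ∪ T')).card :=
                  mul_le_mul_of_nonneg_left (ihT hT'sub) (le_of_lt hx1')
              _ ≤ (A (S2 ∪ insert j T')).card := by rw [hUnion]; exact hstep
        have hS1card : S1.card ≤ D - 1 := by
          by_cases hvi : (vars i).Nonempty
          · have hiΓ : i ∈ Γ := by
              simp only [hΓdef, Finset.mem_filter, Finset.mem_univ, true_and]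
              intro h
              rw [Finset.disjoint_self_iff_empty] at h
              exact Finset.not_nonempty_empty (h ▸ hvi)
            have hsub : S1 ⊆ Γ.erase i := by
              intro k hk
              rw [Finset.mem_erase]
              exact ⟨fun h => hiS (h ▸ Finset.mem_of_mem_inter_left hk),
                Finset.mem_of_mem_inter_right hk⟩
            calc S1.card ≤ (Γ.erase i).card := Finset.card_le_card hsub
              _ = Γ.card - 1 := Finset.card_erase_of_mem hiΓ
              _ ≤ D - 1 := by
                  have hΓi : Γ.card ≤ D := by rw [hΓdef]; exact hΓ i
                  omega
          · have hvars : vars i = ∅ := Finset.not_nonempty_iff_eq_empty.mp hvi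
            have hempty : S1 = ∅ := by
              rw [hS1, hΓdef]
              ext k
              simp [hvars]
            simp [hempty]
        have hindep : ((Bad i ∩ A S2).card : ℝ) * 2 ^ (Fintype.card X)
            = (Bad i).card * (A S2).card := by
          have key := indep_card (vars i) (Bad i) (A S2) (hcyl i) ?_
          · exact_mod_cast congrArg (fun m : ℕ => (m : ℝ)) key
          · intro f g hfg
            simp only [hAdef, Finset.mem_filter, Finset.mem_univ, true_and]
            have keyj : ∀ j ∈ S2, (f ∈ Bad j ↔ g ∈ Bad j) := by
              intro j hj
              have hdisj : Disjoint (vars i) (vars j) := by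
                have hmem := (Finset.mem_sdiff.mp hj).2
                simp only [hΓdef, Finset.mem_filter, Finset.mem_univ, true_and,
                  not_not] at hmem
                exact hmem
              apply hcyl j
              intro y hy
              apply hfg
              exact fun hyi => (Finset.disjoint_left.mp hdisj) hyi hy
            constructor <;> intro h j hj
            · exact fun hg => (h j hj) ((keyj j hj).mpr hg)
            · exact fun hf => (h j hj) ((keyj j hj).mp hf)
        -- assemble the chain
        have step1 : ((Bad i ∩ A S).card : ℝ) ≤ ((Bad i ∩ A S2).card : ℝ) := by
          have : Bad i ∩ A S ⊆ Bad i ∩ A S2 :=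
            Finset.inter_subset_inter (le_refl _) (hanti S2 S hS2sub)
          exact_mod_cast Finset.card_le_card this
        have step2 : ((Bad i ∩ A S2).card : ℝ)
            ≤ x * (1-x) ^ (D-1) * (A S2).card := by
          have h1 : ((Bad i ∩ A S2).card : ℝ) * 2 ^ (Fintype.card X)
              ≤ (x * (1-x) ^ (D-1) * (A S2).card) * 2 ^ (Fintype.card X) := by
            rw [hindep]
            have := mul_le_mul_of_nonneg_right (hp i)
              (show (0:ℝ) ≤ (A S2).card by positivity)
            calc ((Bad i).card : ℝ) * (A S2).card
                ≤ x * (1-x) ^ (D-1) * 2 ^ (Fintype.card X) * (A S2).card := this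
              _ = (x * (1-x) ^ (D-1) * (A S2).card) * 2 ^ (Fintype.card X) := by ring
          exact le_of_mul_le_mul_right h1 h2X
        have step3 : (1-x) ^ (D-1) ≤ (1-x) ^ S1.card :=
          pow_le_pow_of_le_one (le_of_lt hx1') hx1'' hS1card
        have step4 : (1-x) ^ S1.card * ((A S2).card : ℝ) ≤ (A S).card := by
          have := peel S1 (le_refl _)
          rwa [hS12] at this
        have hA2nonneg : (0:ℝ) ≤ (A S2).card := by positivity
        calc ((Bad i ∩ A S).card : ℝ)
            ≤ ((Bad i ∩ A S2).card : ℝ) := step1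
          _ ≤ x * (1-x) ^ (D-1) * (A S2).card := step2
          _ ≤ x * ((1-x) ^ S1.card * (A S2).card) := by
              rw [mul_assoc]
              exact mul_le_mul_of_nonneg_left
                (mul_le_mul_of_nonneg_right step3 hA2nonneg) (le_of_lt hx0)
          _ ≤ x * (A S).card := mul_le_mul_of_nonneg_left step4 (le_of_lt hx0)
      refine ⟨?_, bound⟩
      rcases Finset.eq_empty_or_nonempty S with rfl | ⟨j, hj⟩
      · have hAuniv : A ∅ = univ := by ext f; simp [hAdef]
        rw [hAuniv]
        have hcardu : ((univ : Finset (X → Bool)).card : ℝ) = 2 ^ (Fintype.card X) := by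
          rw [Finset.card_univ, Fintype.card_fun]; push_cast; simp
        rw [hcardu]; exact h2X
      · have hSins : S = insert j (S.erase j) := (Finset.insert_erase hj).symm
        have hecard : (S.erase j).card ≤ n := by
          have := Finset.card_erase_of_mem hj
          have hjc : 0 < S.card := Finset.card_pos.mpr ⟨j, hj⟩
          omega
        obtain ⟨hpos', hbound'⟩ := ih (S.erase j) hecard
        have hb := hbound' j (Finset.notMem_erase _ _)
        rw [hSins, hAcard j (S.erase j)]
        nlinarith [hb]
  obtain ⟨hpos, _⟩ := claim (univ : Finset ι).card univ (le_refl _)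
  have : (A univ).Nonempty := by
    rw [← Finset.card_pos]
    exact_mod_cast hpos
  obtain ⟨f, hf⟩ := this
  simp only [hAdef, Finset.mem_filter, Finset.mem_univ, true_and] at hf
  exact ⟨f, fun i => hf i trivial⟩
end LLL

section Numeric

lemma numeric_ineq (d : ℕ) (hd : 9 ≤ d) :
    (1:ℝ)/2^d ≤ (1/(2*(d:ℝ)^2)) * (1 - 1/(2*(d:ℝ)^2))^(2*d^2 - 1) := by
  have hd9 : (9:ℝ) ≤ (d:ℝ) := by exact_mod_cast hd
  set Dn : ℕ := 2*d^2 with hDn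
  have hDge : (162:ℝ) ≤ (Dn:ℝ) := by
    have : (162:ℕ) ≤ Dn := by rw [hDn]; nlinarith
    exact_mod_cast this
  have hDr : (Dn:ℝ) = 2*(d:ℝ)^2 := by rw [hDn]; push_cast; ring
  have hD1 : (1:ℝ) < (Dn:ℝ) := by linarith
  have hDpos : (0:ℝ) < (Dn:ℝ) := by linarith
  have hDm1 : (0:ℝ) < (Dn:ℝ) - 1 := by linarith
  have h1n : 1 ≤ Dn := by rw [hDn]; nlinarith
  have hcast : ((Dn - 1 : ℕ):ℝ) = (Dn:ℝ) - 1 := by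
    push_cast [Nat.cast_sub h1n]; ring
  -- z ≤ e
  set z : ℝ := ((Dn:ℝ)/((Dn:ℝ)-1))^(Dn-1) with hzdef
  have hz_exp : z ≤ Real.exp 1 := by
    have h1 : (Dn:ℝ)/((Dn:ℝ)-1) = 1 + 1/((Dn:ℝ)-1) := by field_simp; ring
    have h2 : 1 + 1/((Dn:ℝ)-1) ≤ Real.exp (1/((Dn:ℝ)-1)) := by
      have := Real.add_one_le_exp (1/((Dn:ℝ)-1))
      linarith
    have h3 : z ≤ (Real.exp (1/((Dn:ℝ)-1)))^(Dn-1) := by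
      rw [hzdef, h1]
      apply pow_le_pow_left₀ _ h2
      positivity
    have h4 : (Real.exp (1/((Dn:ℝ)-1)))^(Dn-1) = Real.exp 1 := by
      rw [← Real.exp_nat_mul, hcast]
      congr 1
      field_simp
    rw [h4] at h3; exact h3
  have hexp : Real.exp 1 ≤ 2.7182818286 := le_of_lt Real.exp_one_lt_d9
  -- 2.72 * Dn ≤ 2^d
  have hkey : Real.exp 1 * (Dn:ℝ) ≤ 2^d := by
    have main : ∀ m : ℕ, 9 ≤ m → (2.7182818286:ℝ) * (2*(m:ℝ)^2) ≤ 2^m := by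
      intro m hm
      induction m, hm using Nat.le_induction with
      | base => norm_num
      | succ k hk ihk =>
        have hk9 : (9:ℝ) ≤ (k:ℝ) := by exact_mod_cast hk
        have h1 : (2.7182818286:ℝ) * (2*((k:ℝ)+1)^2) ≤ 2 * ((2.7182818286:ℝ) * (2*(k:ℝ)^2)) := by
          nlinarith
        calc (2.7182818286:ℝ) * (2*((k+1:ℕ):ℝ)^2)
            = (2.7182818286:ℝ) * (2*((k:ℝ)+1)^2) := by push_cast; ring
          _ ≤ 2 * ((2.7182818286:ℝ) * (2*(k:ℝ)^2)) := h1
          _ ≤ 2 * 2^k := by linarith [ihk]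
          _ = 2^(k+1) := by ring
    have := main d hd
    rw [hDr]
    nlinarith [this, hexp, sq_nonneg ((d:ℝ))]
  -- y * z = 1
  set y : ℝ := (((Dn:ℝ)-1)/(Dn:ℝ))^(Dn-1) with hydef
  have hyz : y * z = 1 := by
    rw [hydef, hzdef, ← mul_pow]
    have : ((Dn:ℝ)-1)/(Dn:ℝ) * ((Dn:ℝ)/((Dn:ℝ)-1)) = 1 := by field_simp
    rw [this, one_pow]
  have hy0 : 0 < y := by
    rw [hydef]; positivity
  -- final
  have hgoalform : (1/(2*(d:ℝ)^2)) * (1 - 1/(2*(d:ℝ)^2))^(2*d^2 - 1) = y / (Dn:ℝ) := by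
    rw [hydef, ← hDr]
    have : 1 - 1/(Dn:ℝ) = ((Dn:ℝ)-1)/(Dn:ℝ) := by field_simp
    rw [this, hDn]
    ring
  rw [hgoalform]
  rw [div_le_div_iff₀ (by positivity) hDpos]
  have hzpos : 0 < z := by rw [hzdef]; positivity
  have h5 : (Dn:ℝ) * z ≤ 2^d := le_trans (by nlinarith) hkey
  calc (1:ℝ) * (Dn:ℝ) = (Dn:ℝ) * (y * z) := by rw [hyz]; ring
    _ = ((Dn:ℝ) * z) * y := by ring
    _ ≤ 2^d * y := mul_le_mul_of_nonneg_right h5 (le_of_lt hy0)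
    _ = y * 2^d := by ring
end Numeric

section App
variable {V : Type*} [Fintype V] [DecidableEq V] (G : SimpleGraph V) [DecidableRel G.Adj]

open scoped Classical in
lemma card_edges_through (z : V) :
    (univ.filter (fun m : G.edgeSet => z ∈ (m : Sym2 V))).card = G.degree z := by
  classical
  rw [← SimpleGraph.card_incidenceFinset_eq_degree]
  refine Finset.card_nbij (fun m => (m : Sym2 V)) ?_ ?_ ?_
  · intro m hm
    simp only [Finset.mem_coe, Finset.mem_filter, Finset.mem_univ, true_and] at hm
    rw [Finset.mem_coe, SimpleGraph.mem_incidenceFinset]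
    exact ⟨m.2, hm⟩
  · intro m hm m' hm' h
    exact Subtype.ext h
  · intro e he
    rw [Finset.mem_coe, SimpleGraph.mem_incidenceFinset] at he
    exact ⟨⟨e, he.1⟩, by simpa using he.2, rfl⟩

lemma card_incFilter (u : V)
    [inst : DecidablePred (fun x : V ⊕ G.edgeSet =>
      Sum.elim (fun w : V => w = u) (fun e : G.edgeSet => u ∈ (e : Sym2 V)) x)] :
    ((univ : Finset (V ⊕ G.edgeSet)).filter
      (fun x => Sum.elim (fun w : V => w = u) (fun e : G.edgeSet => u ∈ (e : Sym2 V)) x)).card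
      = G.degree u + 1 := by
  classical
  have hset : ((univ : Finset (V ⊕ G.edgeSet)).filter
      (fun x => Sum.elim (fun w : V => w = u) (fun e : G.edgeSet => u ∈ (e : Sym2 V)) x))
      = insert (Sum.inl u)
        ((univ.filter (fun m : G.edgeSet => u ∈ (m : Sym2 V))).image Sum.inr) := by
    ext x
    cases x with
    | inl w => simp
    | inr e => simp
  rw [hset, Finset.card_insert_of_notMem (by simp),
    Finset.card_image_of_injective _ Sum.inr_injective, card_edges_through]
end App

section IncTotal
variable {V : Type*} [Fintype V] [DecidableEq V] (G : SimpleGraph V) [DecidableRel G.Adj]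
  (σ : LinearOrder (V ⊕ G.edgeSet))

lemma incTotal_mem (u : V) (x : V ⊕ G.edgeSet) :
    x ∈ incTotal G σ u ↔
      Sum.elim (fun w : V => w = u) (fun e : G.edgeSet => u ∈ (e : Sym2 V)) x := by
  letI := σ
  letI : DecidablePred (fun x : V ⊕ G.edgeSet =>
      Sum.elim (fun w : V => w = u) (fun e : G.edgeSet => u ∈ (e : Sym2 V)) x) :=
    Classical.decPred _
  unfold incTotal
  rw [Finset.mem_sort, Finset.mem_filter]
  simp

lemma incTotal_nodup (u : V) : (incTotal G σ u).Nodup := by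
  letI := σ
  unfold incTotal
  exact Finset.sort_nodup _ _

lemma incTotal_length (u : V) : (incTotal G σ u).length = G.degree u + 1 := by
  letI := σ
  letI : DecidablePred (fun x : V ⊕ G.edgeSet =>
      Sum.elim (fun w : V => w = u) (fun e : G.edgeSet => u ∈ (e : Sym2 V)) x) :=
    Classical.decPred _
  unfold incTotal
  rw [Finset.length_sort]
  exact card_incFilter G u

lemma incTotal_common {u v : V} (h : G.Adj u v) {x : V ⊕ G.edgeSet}
    (hu : x ∈ incTotal G σ u) (hv : x ∈ incTotal G σ v) :
    x = Sum.inr ⟨s(u,v), h⟩ := by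
  rw [incTotal_mem] at hu hv
  cases x with
  | inl w =>
    simp only [Sum.elim_inl] at hu hv
    exact absurd (hu.symm.trans hv) h.ne
  | inr e =>
    simp only [Sum.elim_inr] at hu hv
    have : (e : Sym2 V) = s(u,v) := (Sym2.mem_and_mem_iff h.ne).mp ⟨hu, hv⟩
    exact congrArg Sum.inr (Subtype.ext this)
end IncTotal

section Events
variable {V : Type*} [Fintype V] [DecidableEq V] (G : SimpleGraph V) [DecidableRel G.Adj]
  (σ : LinearOrder (V ⊕ G.edgeSet))

lemma edge_rep (m : G.edgeSet) : ∃ u v, ∃ h : G.Adj u v, (m : Sym2 V) = s(u,v) := by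
  obtain ⟨e, he⟩ := m
  induction e using Sym2.ind with
  | _ u v => exact ⟨u, v, he, rfl⟩

/-- The set of variables relevant to the bad event at edge `m`. -/
noncomputable def VarsSet (m : G.edgeSet) : Finset (V ⊕ G.edgeSet) :=
  letI : DecidablePred (fun x : V ⊕ G.edgeSet =>
      Sum.elim (fun z : V => z ∈ (m : Sym2 V))
        (fun e : G.edgeSet => ∃ z, z ∈ (m : Sym2 V) ∧ z ∈ (e : Sym2 V)) x) :=
    Classical.decPred _
  univ.filter (fun x : V ⊕ G.edgeSet =>
    Sum.elim (fun z : V => z ∈ (m : Sym2 V))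
      (fun e : G.edgeSet => ∃ z, z ∈ (m : Sym2 V) ∧ z ∈ (e : Sym2 V)) x)

lemma mem_VarsSet (m : G.edgeSet) (x : V ⊕ G.edgeSet) :
    x ∈ VarsSet G m ↔
      Sum.elim (fun z : V => z ∈ (m : Sym2 V))
        (fun e : G.edgeSet => ∃ z, z ∈ (m : Sym2 V) ∧ z ∈ (e : Sym2 V)) x := by
  letI : DecidablePred (fun x : V ⊕ G.edgeSet =>
      Sum.elim (fun z : V => z ∈ (m : Sym2 V))
        (fun e : G.edgeSet => ∃ z, z ∈ (m : Sym2 V) ∧ z ∈ (e : Sym2 V)) x) :=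
    Classical.decPred _
  unfold VarsSet
  rw [Finset.mem_filter]
  simp

variable (va vb : V ⊕ G.edgeSet → ℝ)

/-- The bad event at edge `m`: the induced colour sequences of its endpoints agree. -/
noncomputable def BadSet (m : G.edgeSet) : Finset ((V ⊕ G.edgeSet) → Bool) :=
  letI : DecidablePred (fun f : (V ⊕ G.edgeSet) → Bool =>
      ∃ a b : V, (m : Sym2 V) = s(a,b) ∧
        totalSeqColor G σ (valf va vb f) a = totalSeqColor G σ (valf va vb f) b) :=
    Classical.decPred _
  univ.filter (fun f : (V ⊕ G.edgeSet) → Bool =>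
    ∃ a b : V, (m : Sym2 V) = s(a,b) ∧
      totalSeqColor G σ (valf va vb f) a = totalSeqColor G σ (valf va vb f) b)

lemma mem_BadSet (m : G.edgeSet) (f : (V ⊕ G.edgeSet) → Bool) :
    f ∈ BadSet G σ va vb m ↔
      ∃ a b : V, (m : Sym2 V) = s(a,b) ∧
        totalSeqColor G σ (valf va vb f) a = totalSeqColor G σ (valf va vb f) b := by
  letI : DecidablePred (fun f : (V ⊕ G.edgeSet) → Bool =>
      ∃ a b : V, (m : Sym2 V) = s(a,b) ∧
        totalSeqColor G σ (valf va vb f) a = totalSeqColor G σ (valf va vb f) b) :=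
    Classical.decPred _
  unfold BadSet
  rw [Finset.mem_filter]
  simp

lemma incTotal_subset_vars (m : G.edgeSet) (a : V) (ha : a ∈ (m : Sym2 V)) :
    ∀ x ∈ incTotal G σ a, x ∈ VarsSet G m := by
  intro x hx
  rw [incTotal_mem] at hx
  rw [mem_VarsSet]
  cases x with
  | inl w => simp only [Sum.elim_inl] at hx ⊢; exact hx ▸ ha
  | inr e => exact ⟨a, ha, hx⟩

lemma colour_cyl (m : G.edgeSet) (a : V) (ha : a ∈ (m : Sym2 V))
    (f g : (V ⊕ G.edgeSet) → Bool) (hfg : ∀ x ∈ VarsSet G m, f x = g x) :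
    totalSeqColor G σ (valf va vb f) a = totalSeqColor G σ (valf va vb g) a := by
  unfold totalSeqColor
  apply List.map_congr_left
  intro x hx
  have := hfg x (incTotal_subset_vars G σ m a ha x hx)
  simp [valf, this]

lemma BadSet_cyl (m : G.edgeSet) (f g : (V ⊕ G.edgeSet) → Bool)
    (hfg : ∀ x ∈ VarsSet G m, f x = g x) :
    f ∈ BadSet G σ va vb m ↔ g ∈ BadSet G σ va vb m := by
  rw [mem_BadSet, mem_BadSet]
  constructor
  · rintro ⟨a, b, hm, heq⟩
    refine ⟨a, b, hm, ?_⟩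
    have ha : a ∈ (m : Sym2 V) := by rw [hm]; exact Sym2.mem_mk_left a b
    have hb : b ∈ (m : Sym2 V) := by rw [hm]; exact Sym2.mem_mk_right a b
    rw [← colour_cyl G σ va vb m a ha f g hfg, ← colour_cyl G σ va vb m b hb f g hfg]
    exact heq
  · rintro ⟨a, b, hm, heq⟩
    refine ⟨a, b, hm, ?_⟩
    have ha : a ∈ (m : Sym2 V) := by rw [hm]; exact Sym2.mem_mk_left a b
    have hb : b ∈ (m : Sym2 V) := by rw [hm]; exact Sym2.mem_mk_right a b
    rw [colour_cyl G σ va vb m a ha f g hfg, colour_cyl G σ va vb m b hb f g hfg]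
    exact heq

open scoped Classical in
lemma vars_dep_bound {d : ℕ} (hreg : G.IsRegularOfDegree d) (m : G.edgeSet) :
    (univ.filter (fun m' : G.edgeSet => ¬ Disjoint (VarsSet G m) (VarsSet G m'))).card
      ≤ 2 * d ^ 2 := by
  obtain ⟨u, v, hadj, hm⟩ := edge_rep G m
  have hsub : univ.filter (fun m' : G.edgeSet => ¬ Disjoint (VarsSet G m) (VarsSet G m'))
      ⊆ (G.neighborFinset u ∪ G.neighborFinset v).biUnion
          (fun z => univ.filter (fun m' : G.edgeSet => z ∈ (m' : Sym2 V))) := by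
    intro m' hm'
    simp only [Finset.mem_filter, Finset.mem_univ, true_and] at hm'
    obtain ⟨x, hxm, hxm'⟩ := Finset.not_disjoint_iff.mp hm'
    rw [mem_VarsSet] at hxm hxm'
    have key : ∃ z, z ∈ G.neighborFinset u ∪ G.neighborFinset v ∧ z ∈ (m' : Sym2 V) := by
      cases x with
      | inl z =>
        simp only [Sum.elim_inl] at hxm hxm'
        refine ⟨z, ?_, hxm'⟩
        rw [hm, Sym2.mem_iff] at hxm
        rcases hxm with rfl | rfl
        · exact Finset.mem_union_right _ (by rw [SimpleGraph.mem_neighborFinset]; exact hadj.symm)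
        · exact Finset.mem_union_left _ (by rw [SimpleGraph.mem_neighborFinset]; exact hadj)
      | inr e =>
        simp only [Sum.elim_inr] at hxm hxm'
        obtain ⟨z1, hz1m, hz1e⟩ := hxm
        obtain ⟨z2, hz2m', hz2e⟩ := hxm'
        refine ⟨z2, ?_, hz2m'⟩
        by_cases hzz : z2 = z1
        · subst hzz
          rw [hm, Sym2.mem_iff] at hz1m
          rcases hz1m with rfl | rfl
          · exact Finset.mem_union_right _ (by rw [SimpleGraph.mem_neighborFinset]; exact hadj.symm)
          · exact Finset.mem_union_left _ (by rw [SimpleGraph.mem_neighborFinset]; exact hadj)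
        · have he : (e : Sym2 V) = s(z1, z2) := (Sym2.mem_and_mem_iff (Ne.symm hzz)).mp ⟨hz1e, hz2e⟩
          have hadj12 : G.Adj z1 z2 := by
            have := e.2
            rw [he] at this
            exact this
          rw [hm, Sym2.mem_iff] at hz1m
          rcases hz1m with rfl | rfl
          · exact Finset.mem_union_left _ (by rw [SimpleGraph.mem_neighborFinset]; exact hadj12)
          · exact Finset.mem_union_right _ (by rw [SimpleGraph.mem_neighborFinset]; exact hadj12)
    obtain ⟨z, hz1, hz2⟩ := key
    exact Finset.mem_biUnion.mpr ⟨z, hz1, by simp [hz2]⟩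
  calc (univ.filter (fun m' : G.edgeSet => ¬ Disjoint (VarsSet G m) (VarsSet G m'))).card
      ≤ ((G.neighborFinset u ∪ G.neighborFinset v).biUnion
          (fun z => univ.filter (fun m' : G.edgeSet => z ∈ (m' : Sym2 V)))).card :=
        Finset.card_le_card hsub
    _ ≤ (G.neighborFinset u ∪ G.neighborFinset v).sum
          (fun z => (univ.filter (fun m' : G.edgeSet => z ∈ (m' : Sym2 V))).card) :=
        Finset.card_biUnion_le
    _ ≤ (G.neighborFinset u ∪ G.neighborFinset v).card * d := by
        apply Finset.sum_le_card_nsmul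
        intro z _
        exact le_of_eq (by rw [card_edges_through G z, hreg z])
    _ ≤ (2 * d) * d := by
        apply Nat.mul_le_mul_right
        calc (G.neighborFinset u ∪ G.neighborFinset v).card
            ≤ (G.neighborFinset u).card + (G.neighborFinset v).card := Finset.card_union_le _ _
          _ = d + d := by rw [G.card_neighborFinset_eq_degree, G.card_neighborFinset_eq_degree,
              hreg u, hreg v]
          _ = 2 * d := by ring
    _ = 2 * d ^ 2 := by ring
end Events

section Density
variable {V : Type*} [Fintype V] [DecidableEq V] (G : SimpleGraph V) [DecidableRel G.Adj]
  (σ : LinearOrder (V ⊕ G.edgeSet)) (va vb : V ⊕ G.edgeSet → ℝ)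

lemma BadSet_card (hv : ∀ x, va x ≠ vb x) {d : ℕ} (hreg : G.IsRegularOfDegree d)
    (m : G.edgeSet) :
    (BadSet G σ va vb m).card * 2 ^ d ≤ 2 ^ (Fintype.card (V ⊕ G.edgeSet)) := by
  classical
  obtain ⟨u, v, hadj, hm⟩ := edge_rep G m
  set Lu := incTotal G σ u with hLu
  set Lv := incTotal G σ v with hLv
  have hlu : Lu.length = d + 1 := by rw [hLu, incTotal_length, hreg u]
  have hlv : Lv.length = d + 1 := by rw [hLv, incTotal_length, hreg v]
  have hnodu : Lu.Nodup := incTotal_nodup G σ u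
  have hnodv : Lv.Nodup := incTotal_nodup G σ v
  have hm_mem : (Sum.inr m : V ⊕ G.edgeSet) ∈ Lv := by
    rw [hLv, incTotal_mem]
    simp only [Sum.elim_inr]
    rw [hm]
    exact Sym2.mem_mk_right u v
  obtain ⟨j0, hj0⟩ := List.mem_iff_get.mp hm_mem
  set P : Finset ℕ := (Finset.range (d+1)).erase j0.val with hP
  set pa : ℕ → V ⊕ G.edgeSet := fun i => Lu.getD i (Sum.inl u) with hpa
  set pb : ℕ → V ⊕ G.edgeSet := fun i => Lv.getD i (Sum.inl u) with hpb
  have hiP : ∀ i ∈ P, i < Lu.length ∧ i < Lv.length := by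
    intro i hi
    have := Finset.mem_range.mp (Finset.mem_of_mem_erase hi)
    omega
  have pa_eq : ∀ i (h1 : i < Lu.length), pa i = Lu.get ⟨i, h1⟩ := by
    intro i h1; rw [hpa]; exact List.getD_eq_getElem _ _ h1
  have pb_eq : ∀ i (h1 : i < Lv.length), pb i = Lv.get ⟨i, h1⟩ := by
    intro i h1; rw [hpb]; exact List.getD_eq_getElem _ _ h1
  -- the common element
  have hcommon : ∀ z : V ⊕ G.edgeSet, z ∈ Lu → z ∈ Lv → z = Sum.inr m := by
    intro z h1 h2
    have := incTotal_common G σ hadj h1 h2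
    rw [this]
    congr 1
    exact Subtype.ext hm.symm
  -- distinctness facts
  have key_ne : ∀ i (h2 : i < Lv.length), i ≠ j0.val → Lv.get ⟨i, h2⟩ ≠ Sum.inr m := by
    intro i h2 hne hcon
    apply hne
    have : (⟨i, h2⟩ : Fin Lv.length) = j0 :=
      hnodv.get_inj_iff.mp (hcon.trans hj0.symm)
    exact congrArg Fin.val this
  -- hne for pairs
  have hP1 : ∀ i ∈ P, pa i ≠ pb i := by
    intro i hi hcon
    obtain ⟨h1, h2⟩ := hiP i hi
    rw [pa_eq i h1, pb_eq i h2] at hcon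
    have hz : Lv.get ⟨i, h2⟩ = Sum.inr m :=
      hcommon _ (hcon ▸ List.get_mem Lu _) (List.get_mem Lv _)
    exact key_ne i h2 (Finset.ne_of_mem_erase hi) hz
  have hP2 : ∀ i ∈ P, ∀ j ∈ P, i ≠ j →
      pa i ≠ pa j ∧ pa i ≠ pb j ∧ pb i ≠ pa j ∧ pb i ≠ pb j := by
    intro i hi j hj hij
    obtain ⟨hi1, hi2⟩ := hiP i hi
    obtain ⟨hj1, hj2⟩ := hiP j hj
    refine ⟨?_, ?_, ?_, ?_⟩
    · rw [pa_eq i hi1, pa_eq j hj1]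
      intro hcon
      rw [hnodu.get_inj_iff] at hcon
      exact hij (congrArg Fin.val hcon)
    · rw [pa_eq i hi1, pb_eq j hj2]
      intro hcon
      have hz : Lv.get ⟨j, hj2⟩ = Sum.inr m :=
        hcommon _ (hcon ▸ List.get_mem Lu _) (List.get_mem Lv _)
      exact key_ne j hj2 (Finset.ne_of_mem_erase hj) hz
    · rw [pb_eq i hi2, pa_eq j hj1]
      intro hcon
      have hz : Lv.get ⟨i, hi2⟩ = Sum.inr m :=
        hcommon _ (hcon.symm ▸ List.get_mem Lu _) (List.get_mem Lv _)
      exact key_ne i hi2 (Finset.ne_of_mem_erase hi) hz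
    · rw [pb_eq i hi2, pb_eq j hj2]
      intro hcon
      rw [hnodv.get_inj_iff] at hcon
      exact hij (congrArg Fin.val hcon)
  -- Bad set is contained in the pair-agreement event
  have hsub : BadSet G σ va vb m ⊆ Finset.univ.filter
      (fun f : (V ⊕ G.edgeSet) → Bool =>
        ∀ i ∈ P, valf va vb f (pa i) = valf va vb f (pb i)) := by
    intro f hf
    rw [mem_BadSet] at hf
    obtain ⟨a, b, hab, heqab⟩ := hf
    have heq : totalSeqColor G σ (valf va vb f) u = totalSeqColor G σ (valf va vb f) v := by
      have : s(a, b) = s(u, v) := hab.symm.trans hm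
      rw [Sym2.eq_iff] at this
      rcases this with ⟨rfl, rfl⟩ | ⟨rfl, rfl⟩
      · exact heqab
      · exact heqab.symm
    rw [Finset.mem_filter]
    refine ⟨Finset.mem_univ _, ?_⟩
    intro i hi
    obtain ⟨h1, h2⟩ := hiP i hi
    unfold totalSeqColor at heq
    have hmap : (Lu.map (valf va vb f)).getD i 0 = (Lv.map (valf va vb f)).getD i 0 := by
      rw [hLu, hLv, heq]
    rw [List.getD_eq_getElem _ _ (by rw [List.length_map]; exact h1),
        List.getD_eq_getElem _ _ (by rw [List.length_map]; exact h2)] at hmap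
    rw [List.getElem_map, List.getElem_map] at hmap
    rw [pa_eq i h1, pb_eq i h2]
    exact hmap
  have hj0lt : j0.val < d + 1 := by rw [← hlv]; exact j0.isLt
  have hPcard : P.card = d := by
    rw [hP, Finset.card_erase_of_mem (Finset.mem_range.mpr hj0lt), Finset.card_range]
    omega
  calc (BadSet G σ va vb m).card * 2 ^ d
      ≤ (Finset.univ.filter
          (fun f : (V ⊕ G.edgeSet) → Bool =>
            ∀ i ∈ P, valf va vb f (pa i) = valf va vb f (pb i))).card * 2 ^ d :=
        Nat.mul_le_mul_right _ (Finset.card_le_card hsub)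
    _ = (Finset.univ.filter
          (fun f : (V ⊕ G.edgeSet) → Bool =>
            ∀ i ∈ P, valf va vb f (pa i) = valf va vb f (pb i))).card * 2 ^ P.card := by
        rw [hPcard]
    _ ≤ 2 ^ (Fintype.card (V ⊕ G.edgeSet)) := count_pairs va vb hv P pa pb hP1 hP2
end Density


/-- If `G` is `d`-regular with `d ≥ 9`, then `ch_σ^t(G) ≤ 2`. -/
theorem stmt_10 [Fintype V] [DecidableEq V] (G : SimpleGraph V) [DecidableRel G.Adj]
    (d : ℕ) (hd : 9 ≤ d) (hreg : G.IsRegularOfDegree d)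
    (σ : LinearOrder (V ⊕ G.edgeSet))
    (L : V ⊕ G.edgeSet → Finset ℝ) (hL : ∀ x, (L x).card = 2) :
    ∃ w : V ⊕ G.edgeSet → ℝ, (∀ x, w x ∈ L x) ∧ ProperTotalSeq G σ w := by
  classical
  have hdR : (9:ℝ) ≤ (d:ℝ) := by exact_mod_cast hd
  -- choose the two values in each list
  have h2 : ∀ x : V ⊕ G.edgeSet, ∃ q : ℝ × ℝ, q.1 ≠ q.2 ∧ L x = {q.1, q.2} := by
    intro x
    obtain ⟨a, b, hab, hL'⟩ := Finset.card_eq_two.mp (hL x)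
    exact ⟨(a, b), hab, hL'⟩
  choose q hq1 hq2 using h2
  set va : V ⊕ G.edgeSet → ℝ := fun x => (q x).1 with hva
  set vb : V ⊕ G.edgeSet → ℝ := fun x => (q x).2 with hvb
  have hv : ∀ x, va x ≠ vb x := hq1
  have hd1 : 1 ≤ 2 * d ^ 2 := by nlinarith
  have hx0 : (0:ℝ) < 1 / (2 * (d:ℝ)^2) := by positivity
  have hx1 : 1 / (2 * (d:ℝ)^2) < 1 := by
    rw [div_lt_one (by positivity)]
    nlinarith
  have hp : ∀ m : G.edgeSet, ((BadSet G σ va vb m).card : ℝ) ≤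
      (1 / (2 * (d:ℝ)^2)) * (1 - 1 / (2 * (d:ℝ)^2)) ^ (2 * d ^ 2 - 1)
        * 2 ^ (Fintype.card (V ⊕ G.edgeSet)) := by
    intro m
    have hcard := BadSet_card G σ va vb hv hreg m
    have hcast : ((BadSet G σ va vb m).card : ℝ) * 2 ^ d
        ≤ 2 ^ (Fintype.card (V ⊕ G.edgeSet)) := by exact_mod_cast hcard
    have h2d : (0:ℝ) < 2 ^ d := by positivity
    have step1 : ((BadSet G σ va vb m).card : ℝ)
        ≤ (1 / 2 ^ d) * 2 ^ (Fintype.card (V ⊕ G.edgeSet)) := by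
      rw [div_mul_eq_mul_div, le_div_iff₀ h2d]
      linarith [hcast]
    calc ((BadSet G σ va vb m).card : ℝ)
        ≤ (1 / 2 ^ d) * 2 ^ (Fintype.card (V ⊕ G.edgeSet)) := step1
      _ ≤ ((1 / (2 * (d:ℝ)^2)) * (1 - 1 / (2 * (d:ℝ)^2)) ^ (2 * d ^ 2 - 1))
            * 2 ^ (Fintype.card (V ⊕ G.edgeSet)) :=
          mul_le_mul_of_nonneg_right (numeric_ineq d hd) (by positivity)
      _ = (1 / (2 * (d:ℝ)^2)) * (1 - 1 / (2 * (d:ℝ)^2)) ^ (2 * d ^ 2 - 1)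
            * 2 ^ (Fintype.card (V ⊕ G.edgeSet)) := by ring
  obtain ⟨f, hf⟩ := LLL (VarsSet G) (BadSet G σ va vb)
    (fun m f g hfg => BadSet_cyl G σ va vb m f g hfg)
    (2 * d ^ 2) hd1
    (fun m => vars_dep_bound G hreg m)
    (1 / (2 * (d:ℝ)^2)) hx0 hx1 hp
  refine ⟨valf va vb f, ?_, ?_⟩
  · intro x
    rw [hq2 x]
    unfold valf
    split
    · exact Finset.mem_insert_self _ _
    · exact Finset.mem_insert_of_mem (Finset.mem_singleton_self _)
  · intro a b hab hcon
    exact hf ⟨s(a,b), (SimpleGraph.mem_edgeSet G).mpr hab⟩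
      ((mem_BadSet G σ va vb _ f).mpr ⟨a, b, rfl, hcon⟩)
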